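/- Let Ω ⊆ ℂ be open and let r, q, p : Ω → ℂ be smooth with r nowhere vanishing. Suppose on Ω: r_z̄ = −i·r·q̄ and (i/2)·((q̄)_z − q_z̄) = |r|² − |p|². Then the smooth function û := log(2|r|²) satisfies û_{zz̄} + e^û − 2|p|² = 0 on Ω. In particular, if additionally 4|p|²|r|² = |α|² on Ω for some function α : Ω → ℂ, then û satisfies the elliptic sinh–Gordon equation û_{zz̄} + e^û − |α|² e^{−û} = 0 on Ω. -/

import Mathlib

open Complex ComplexConjugate

/-- Wirtinger derivative `g_z = (∂ₓg - i ∂_y g)/2`. -/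
noncomputable def wderivZ (g : ℂ → ℂ) (w : ℂ) : ℂ :=
  (fderiv ℝ g w 1 - Complex.I * fderiv ℝ g w Complex.I) / 2

/-- Wirtinger derivative `g_z̄ = (∂ₓg + i ∂_y g)/2`. -/
noncomputable def wderivZbar (g : ℂ → ℂ) (w : ℂ) : ℂ :=
  (fderiv ℝ g w 1 + Complex.I * fderiv ℝ g w Complex.I) / 2

/-- `û := log(2|r|²)`. -/
noncomputable def uhat (r : ℂ → ℂ) (w : ℂ) : ℝ :=
  Real.log (2 * ‖r w‖ ^ 2)

section lemmas
variable {f g : ℂ → ℂ} {w : ℂ}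

lemma wderivZ_congr (h : f =ᶠ[nhds w] g) : wderivZ f w = wderivZ g w := by
  unfold wderivZ; rw [h.fderiv_eq]

lemma wderivZbar_congr (h : f =ᶠ[nhds w] g) : wderivZbar f w = wderivZbar g w := by
  unfold wderivZbar; rw [h.fderiv_eq]

lemma wderivZ_add (hf : DifferentiableAt ℝ f w) (hg : DifferentiableAt ℝ g w) :
    wderivZ (fun z => f z + g z) w = wderivZ f w + wderivZ g w := by
  unfold wderivZ; rw [fderiv_fun_add hf hg]; simp; ring

lemma wderivZbar_add (hf : DifferentiableAt ℝ f w) (hg : DifferentiableAt ℝ g w) :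
    wderivZbar (fun z => f z + g z) w = wderivZbar f w + wderivZbar g w := by
  unfold wderivZbar; rw [fderiv_fun_add hf hg]; simp; ring

lemma wderivZ_const_mul (c : ℂ) (hf : DifferentiableAt ℝ f w) :
    wderivZ (fun z => c * f z) w = c * wderivZ f w := by
  unfold wderivZ
  have : fderiv ℝ (fun z => c * f z) w = c • fderiv ℝ f w := by
    simpa [smul_eq_mul] using fderiv_fun_const_smul (𝕜 := ℝ) hf c
  rw [this]; simp [smul_eq_mul]; ring

lemma wderivZbar_const_mul (c : ℂ) (hf : DifferentiableAt ℝ f w) :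
    wderivZbar (fun z => c * f z) w = c * wderivZbar f w := by
  unfold wderivZbar
  have : fderiv ℝ (fun z => c * f z) w = c • fderiv ℝ f w := by
    simpa [smul_eq_mul] using fderiv_fun_const_smul (𝕜 := ℝ) hf c
  rw [this]; simp [smul_eq_mul]; ring

lemma wderivZ_mul (hf : DifferentiableAt ℝ f w) (hg : DifferentiableAt ℝ g w) :
    wderivZ (fun z => f z * g z) w = f w * wderivZ g w + g w * wderivZ f w := by
  unfold wderivZ; rw [fderiv_fun_mul hf hg]; simp [smul_eq_mul]; ring

lemma wderivZbar_mul (hf : DifferentiableAt ℝ f w) (hg : DifferentiableAt ℝ g w) :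
    wderivZbar (fun z => f z * g z) w = f w * wderivZbar g w + g w * wderivZbar f w := by
  unfold wderivZbar; rw [fderiv_fun_mul hf hg]; simp [smul_eq_mul]; ring

lemma fderiv_conj_comp (hf : DifferentiableAt ℝ f w) (v : ℂ) :
    fderiv ℝ (fun z => conj (f z)) w v = conj (fderiv ℝ f w v) := by
  have h := (Complex.conjCLE.toContinuousLinearMap.hasFDerivAt.comp w hf.hasFDerivAt).fderiv
  rw [show (fun z => conj (f z)) = (Complex.conjCLE.toContinuousLinearMap ∘ f) from rfl, h]
  simp

lemma wderivZ_conj (hf : DifferentiableAt ℝ f w) :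
    wderivZ (fun z => conj (f z)) w = conj (wderivZbar f w) := by
  unfold wderivZ wderivZbar
  rw [fderiv_conj_comp hf, fderiv_conj_comp hf]
  rw [map_div₀, map_add, map_mul]
  simp [map_ofNat]
  ring

lemma wderivZbar_conj (hf : DifferentiableAt ℝ f w) :
    wderivZbar (fun z => conj (f z)) w = conj (wderivZ f w) := by
  unfold wderivZ wderivZbar
  rw [fderiv_conj_comp hf, fderiv_conj_comp hf]
  rw [map_div₀, map_sub, map_mul]
  simp [map_ofNat]

lemma wderivZ_comp {φ : ℂ → ℂ} {c : ℂ} (hφ : HasDerivAt φ c (f w))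
    (hf : DifferentiableAt ℝ f w) :
    wderivZ (fun z => φ (f z)) w = c * wderivZ f w := by
  have h := ((hφ.hasFDerivAt.restrictScalars ℝ).comp w hf.hasFDerivAt).fderiv
  unfold wderivZ
  rw [show (fun z => φ (f z)) = (φ ∘ f) from rfl, h]
  simp [smul_eq_mul]; ring

lemma wderivZbar_comp {φ : ℂ → ℂ} {c : ℂ} (hφ : HasDerivAt φ c (f w))
    (hf : DifferentiableAt ℝ f w) :
    wderivZbar (fun z => φ (f z)) w = c * wderivZbar f w := by
  have h := ((hφ.hasFDerivAt.restrictScalars ℝ).comp w hf.hasFDerivAt).fderiv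
  unfold wderivZbar
  rw [show (fun z => φ (f z)) = (φ ∘ f) from rfl, h]
  simp [smul_eq_mul]; ring

end lemmas

section second
variable {f : ℂ → ℂ} {w : ℂ}

lemma hasFDerivAt_fderiv_apply (hf : ContDiffAt ℝ 2 f w) (v : ℂ) :
    HasFDerivAt (fun z => fderiv ℝ f z v)
      ((ContinuousLinearMap.apply ℝ ℂ v).comp (fderiv ℝ (fderiv ℝ f) w)) w := by
  have hdf : DifferentiableAt ℝ (fderiv ℝ f) w :=
    (hf.fderiv_right (m := 1) (by norm_num)).differentiableAt one_ne_zero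
  exact (ContinuousLinearMap.apply ℝ ℂ v).hasFDerivAt.comp w hdf.hasFDerivAt

lemma fderiv_wderivZ_apply (hf : ContDiffAt ℝ 2 f w) (u : ℂ) :
    fderiv ℝ (fun z => wderivZ f z) w u
      = (fderiv ℝ (fderiv ℝ f) w u 1 - Complex.I * fderiv ℝ (fderiv ℝ f) w u Complex.I) / 2 := by
  have h1 := hasFDerivAt_fderiv_apply hf 1
  have hI := hasFDerivAt_fderiv_apply hf Complex.I
  have h : HasFDerivAt (fun z => wderivZ f z)
      ((2:ℂ)⁻¹ • (((ContinuousLinearMap.apply ℝ ℂ 1).comp (fderiv ℝ (fderiv ℝ f) w))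
        - Complex.I • ((ContinuousLinearMap.apply ℝ ℂ Complex.I).comp
            (fderiv ℝ (fderiv ℝ f) w)))) w := by
    apply ((h1.sub (hI.const_smul Complex.I)).const_smul ((2:ℂ)⁻¹)).congr_of_eventuallyEq
    filter_upwards with z
    unfold wderivZ
    simp [smul_eq_mul]
    ring
  rw [h.fderiv]
  simp [smul_eq_mul]
  ring

lemma fderiv_wderivZbar_apply (hf : ContDiffAt ℝ 2 f w) (u : ℂ) :
    fderiv ℝ (fun z => wderivZbar f z) w u
      = (fderiv ℝ (fderiv ℝ f) w u 1 + Complex.I * fderiv ℝ (fderiv ℝ f) w u Complex.I) / 2 := by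
  have h1 := hasFDerivAt_fderiv_apply hf 1
  have hI := hasFDerivAt_fderiv_apply hf Complex.I
  have h : HasFDerivAt (fun z => wderivZbar f z)
      ((2:ℂ)⁻¹ • (((ContinuousLinearMap.apply ℝ ℂ 1).comp (fderiv ℝ (fderiv ℝ f) w))
        + Complex.I • ((ContinuousLinearMap.apply ℝ ℂ Complex.I).comp
            (fderiv ℝ (fderiv ℝ f) w)))) w := by
    apply ((h1.add (hI.const_smul Complex.I)).const_smul ((2:ℂ)⁻¹)).congr_of_eventuallyEq
    filter_upwards with z
    unfold wderivZbar
    simp [smul_eq_mul]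
    ring
  rw [h.fderiv]
  simp [smul_eq_mul]
  ring

lemma wderiv_mixed (hf : ContDiffAt ℝ 2 f w) :
    wderivZbar (fun z => wderivZ f z) w = wderivZ (fun z => wderivZbar f z) w := by
  have hsym : fderiv ℝ (fderiv ℝ f) w 1 Complex.I = fderiv ℝ (fderiv ℝ f) w Complex.I 1 :=
    (hf.isSymmSndFDerivAt (by simp)) 1 Complex.I
  have e1 : wderivZbar (fun z => wderivZ f z) w
      = (fderiv ℝ (fun z => wderivZ f z) w 1
          + Complex.I * fderiv ℝ (fun z => wderivZ f z) w Complex.I) / 2 := rfl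
  have e2 : wderivZ (fun z => wderivZbar f z) w
      = (fderiv ℝ (fun z => wderivZbar f z) w 1
          - Complex.I * fderiv ℝ (fun z => wderivZbar f z) w Complex.I) / 2 := rfl
  rw [e1, e2, fderiv_wderivZ_apply hf 1, fderiv_wderivZ_apply hf Complex.I,
    fderiv_wderivZbar_apply hf 1, fderiv_wderivZbar_apply hf Complex.I, hsym]
  ring

end second

lemma hasFDerivAt_wderivZ {f : ℂ → ℂ} {w : ℂ} (hf : ContDiffAt ℝ 2 f w) :
    HasFDerivAt (fun z => wderivZ f z)
      ((2:ℂ)⁻¹ • (((ContinuousLinearMap.apply ℝ ℂ 1).comp (fderiv ℝ (fderiv ℝ f) w))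
        - Complex.I • ((ContinuousLinearMap.apply ℝ ℂ Complex.I).comp
            (fderiv ℝ (fderiv ℝ f) w)))) w := by
  have h1 := hasFDerivAt_fderiv_apply hf 1
  have hI := hasFDerivAt_fderiv_apply hf Complex.I
  apply ((h1.sub (hI.const_smul Complex.I)).const_smul ((2:ℂ)⁻¹)).congr_of_eventuallyEq
  filter_upwards with z
  unfold wderivZ
  simp [smul_eq_mul]
  ring

lemma differentiableAt_wderivZ {f : ℂ → ℂ} {w : ℂ} (hf : ContDiffAt ℝ 2 f w) :
    DifferentiableAt ℝ (fun z => wderivZ f z) w :=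
  (hasFDerivAt_wderivZ hf).differentiableAt

lemma differentiableAt_conj {f : ℂ → ℂ} {w : ℂ} (hf : DifferentiableAt ℝ f w) :
    DifferentiableAt ℝ (fun z => conj (f z)) w :=
  Complex.conjCLE.toContinuousLinearMap.differentiableAt.comp w hf

theorem stmt6 (Ω : Set ℂ) (hΩ : IsOpen Ω)
    (r q p : ℂ → ℂ)
    (hr : ContDiffOn ℝ (⊤ : ℕ∞) r Ω)
    (hq : ContDiffOn ℝ (⊤ : ℕ∞) q Ω)
    (hp : ContDiffOn ℝ (⊤ : ℕ∞) p Ω)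
    (hr0 : ∀ w ∈ Ω, r w ≠ 0)
    (h1 : ∀ w ∈ Ω, wderivZbar r w = -Complex.I * r w * conj (q w))
    (h2 : ∀ w ∈ Ω,
      (Complex.I / 2) * (wderivZ (fun z => conj (q z)) w - wderivZbar q w)
        = (‖r w‖ : ℂ) ^ 2 - (‖p w‖ : ℂ) ^ 2) :
    (∀ w ∈ Ω,
        wderivZbar (fun z => wderivZ (fun z' => (uhat r z' : ℂ)) z) w
          + (Real.exp (uhat r w) : ℂ) - 2 * (‖p w‖ : ℂ) ^ 2 = 0) ∧
    (∀ α : ℂ → ℂ,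
      (∀ w ∈ Ω, 4 * ‖p w‖ ^ 2 * ‖r w‖ ^ 2 = ‖α w‖ ^ 2) →
      ∀ w ∈ Ω,
        wderivZbar (fun z => wderivZ (fun z' => (uhat r z' : ℂ)) z) w
          + (Real.exp (uhat r w) : ℂ)
          - (‖α w‖ : ℂ) ^ 2 * (Real.exp (-uhat r w) : ℂ) = 0) := by
  have hc2 : ∀ z ∈ Ω, ContDiffAt ℝ 2 r z := fun z hz =>
    (hr.contDiffAt (hΩ.mem_nhds hz)).of_le (by decide)
  have hrd : ∀ z ∈ Ω, DifferentiableAt ℝ r z := fun z hz =>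
    (hc2 z hz).differentiableAt two_ne_zero
  have hqd : ∀ z ∈ Ω, DifferentiableAt ℝ q z := fun z hz =>
    ((hq.contDiffAt (hΩ.mem_nhds hz)).of_le (by decide : (1:WithTop ℕ∞) ≤ _)).differentiableAt one_ne_zero
  have hcrd : ∀ z ∈ Ω, DifferentiableAt ℝ (fun x => conj (r x)) z := fun z hz =>
    differentiableAt_conj (hrd z hz)
  have habs : ∀ z ∈ Ω, (0:ℝ) < 2 * ‖r z‖ ^ 2 := by
    intro z hz
    have : 0 < ‖r z‖ := norm_pos_iff.mpr (hr0 z hz)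
    positivity
  have hcast : ∀ z : ℂ, ((2 * ‖r z‖ ^ 2 : ℝ) : ℂ) = 2 * r z * conj (r z) := by
    intro z
    push_cast
    rw [mul_assoc, Complex.mul_conj, ← Complex.ofReal_pow, Complex.sq_norm]
  -- Step A : first Wirtinger derivative of û
  have hG : ∀ z ∈ Ω, wderivZ (fun z' => ((uhat r z' : ℝ) : ℂ)) z
      = wderivZ r z / r z + Complex.I * q z := by
    intro z hz
    have hmd : DifferentiableAt ℝ (fun x => 2 * r x * conj (r x)) z :=
      ((hrd z hz).const_mul 2).mul (hcrd z hz)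
    have heq : (fun z' => ((uhat r z' : ℝ) : ℂ)) =ᶠ[nhds z]
        (fun z' => Complex.log (2 * r z' * conj (r z'))) := by
      filter_upwards [hΩ.mem_nhds hz] with x hx
      rw [show ((uhat r x : ℝ) : ℂ) = Complex.log ((2 * ‖r x‖ ^ 2 : ℝ) : ℂ) from
        Complex.ofReal_log (habs x hx).le, hcast x]
    rw [wderivZ_congr heq]
    have hslit : (2 * r z * conj (r z)) ∈ Complex.slitPlane := by
      rw [← hcast z]
      exact Complex.ofReal_mem_slitPlane.2 (habs z hz)
    rw [wderivZ_comp (f := fun x => 2 * r x * conj (r x))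
      (Complex.hasDerivAt_log hslit) hmd]
    have hmz : wderivZ (fun x => 2 * r x * conj (r x)) z
        = 2 * (conj (r z) * wderivZ r z + r z * conj (wderivZbar r z)) := by
      have hfe : (fun x => 2 * r x * conj (r x)) = (fun x => 2 * (r x * conj (r x))) := by
        funext x; ring
      rw [hfe, wderivZ_const_mul 2 ((hrd z hz).fun_mul (hcrd z hz)),
        wderivZ_mul (hrd z hz) (hcrd z hz), wderivZ_conj (hrd z hz)]
      ring
    rw [hmz, h1 z hz]
    have hrz := hr0 z hz
    have hcrz : conj (r z) ≠ 0 := by simpa using hrz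
    simp only [map_mul, map_neg, Complex.conj_I, Complex.conj_conj]
    field_simp
  -- Step B/C : the key second-order identity
  have key : ∀ w ∈ Ω, wderivZbar (fun z => wderivZ (fun z' => ((uhat r z' : ℝ) : ℂ)) z) w
      = -2 * ((‖r w‖ : ℂ) ^ 2 - (‖p w‖ : ℂ) ^ 2) := by
    intro w hw
    have hFeq : (fun z => wderivZ (fun z' => ((uhat r z' : ℝ) : ℂ)) z) =ᶠ[nhds w]
        (fun z => wderivZ r z / r z + Complex.I * q z) := by
      filter_upwards [hΩ.mem_nhds hw] with z hz using hG z hz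
    rw [wderivZbar_congr hFeq]
    have hA : DifferentiableAt ℝ (fun z => wderivZ r z) w := differentiableAt_wderivZ (hc2 w hw)
    have hrinv : DifferentiableAt ℝ (fun z => (r z)⁻¹) w :=
      ((differentiableAt_inv (hr0 w hw) : DifferentiableAt ℂ _ (r w)).restrictScalars ℝ).comp
        w (hrd w hw)
    have hdiv : DifferentiableAt ℝ (fun z => wderivZ r z / r z) w := by
      simp only [div_eq_mul_inv]; exact hA.mul hrinv
    have hIq : DifferentiableAt ℝ (fun z => Complex.I * q z) w := (hqd w hw).const_mul _
    rw [wderivZbar_add hdiv hIq, wderivZbar_const_mul _ (hqd w hw)]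
    have hdivf : (fun z => wderivZ r z / r z) = (fun z => wderivZ r z * (r z)⁻¹) := by
      funext z; rw [div_eq_mul_inv]
    rw [hdivf, wderivZbar_mul hA hrinv]
    have hinv : wderivZbar (fun z => (r z)⁻¹) w = -((r w) ^ 2)⁻¹ * wderivZbar r w :=
      wderivZbar_comp (hasDerivAt_inv (hr0 w hw)) (hrd w hw)
    have hmixed : wderivZbar (fun z => wderivZ r z) w
        = wderivZ (fun z => -Complex.I * r z * conj (q z)) w := by
      rw [wderiv_mixed (hc2 w hw)]
      apply wderivZ_congr
      filter_upwards [hΩ.mem_nhds hw] with z hz using h1 z hz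
    have hprod : wderivZ (fun z => -Complex.I * r z * conj (q z)) w
        = -Complex.I * (r w * wderivZ (fun z => conj (q z)) w
            + conj (q w) * wderivZ r w) := by
      have hfe : (fun z => -Complex.I * r z * conj (q z))
          = (fun z => (-Complex.I) * (r z * conj (q z))) := by
        funext z; ring
      rw [hfe, wderivZ_const_mul _ ((hrd w hw).fun_mul (differentiableAt_conj (hqd w hw))),
        wderivZ_mul (hrd w hw) (differentiableAt_conj (hqd w hw))]
    rw [hinv, hmixed, hprod, h1 w hw]
    have hQ : -Complex.I * wderivZ (fun z => conj (q z)) w + Complex.I * wderivZbar q w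
        = -2 * ((‖r w‖ : ℂ) ^ 2 - (‖p w‖ : ℂ) ^ 2) := by
      linear_combination (-2 : ℂ) * h2 w hw
    rw [← hQ]
    have hrz := hr0 w hw
    field_simp
    ring
  have hexp : ∀ w ∈ Ω, (Real.exp (uhat r w) : ℂ) = 2 * (‖r w‖ : ℂ) ^ 2 := by
    intro w hw
    simp only [uhat]
    rw [Real.exp_log (habs w hw)]
    push_cast
    ring
  constructor
  · intro w hw
    rw [key w hw, hexp w hw]
    ring
  · intro α hα w hw
    rw [key w hw, hexp w hw]
    have hcalc : (‖α w‖ : ℂ) ^ 2 * (Real.exp (-uhat r w) : ℂ)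
        = 2 * (‖p w‖ : ℂ) ^ 2 := by
      simp only [uhat]
      rw [Real.exp_neg, Real.exp_log (habs w hw)]
      have hC : (4 : ℂ) * (‖p w‖ : ℂ) ^ 2 * (‖r w‖ : ℂ) ^ 2
          = (‖α w‖ : ℂ) ^ 2 := by exact_mod_cast hα w hw
      have h0 : (‖r w‖ : ℂ) ≠ 0 := by
        simpa using hr0 w hw
      push_cast
      field_simp
      linear_combination -hC
    rw [hcalc]
    ring
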